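/- Let A_n := E[([R_n - 1]^+)^γ] where R_{n+1} = (R_n^{(1)} R_n^{(2)} + (B-1))/B with R_n^{(1)}, R_n^{(2)} independent copies of R_n ≥ 0. Then A_{n+1} ≤ (A_n^2 + 2A_n)/B^γ for every γ ∈ (0,1]. -/

import Mathlib

open MeasureTheory ProbabilityTheory

private lemma real_rpow_add_le_add_rpow {a b p : ℝ} (ha : 0 ≤ a) (hb : 0 ≤ b)
    (hp : 0 ≤ p) (hp1 : p ≤ 1) : (a + b) ^ p ≤ a ^ p + b ^ p := by
  have h := NNReal.coe_le_coe.2 (NNReal.rpow_add_le_add_rpow a.toNNReal b.toNNReal hp hp1)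
  simpa [NNReal.coe_rpow, Real.coe_toNNReal a ha, Real.coe_toNNReal b hb,
    Real.toNNReal_add ha hb] using h

/-- One step of the fractional moment bound: if `R1, R2` are independent copies of the
nonnegative random variable `R_n` and `A = E[([R_n - 1]^+)^γ]`, then
`E[([R_{n+1} - 1]^+)^γ] ≤ (A^2 + 2A)/B^γ` for `γ ∈ (0,1]`. -/
theorem stmt6 {Ω : Type*} [MeasurableSpace Ω] (μ : Measure Ω) [IsProbabilityMeasure μ]
    (B γ : ℝ) (hB : 2 < B) (hγ : γ ∈ Set.Ioc (0 : ℝ) 1)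
    (R1 R2 : Ω → ℝ) (hind : IndepFun R1 R2 μ) (hid : IdentDistrib R1 R2 μ μ)
    (hpos1 : ∀ x, 0 ≤ R1 x) (hpos2 : ∀ x, 0 ≤ R2 x)
    (hint1 : Integrable (fun x => max (R1 x - 1) 0 ^ γ) μ)
    (hint2 : Integrable (fun x => max (R2 x - 1) 0 ^ γ) μ)
    (hint3 : Integrable (fun x => max ((R1 x * R2 x + (B - 1)) / B - 1) 0 ^ γ) μ) :
    ∫ x, max ((R1 x * R2 x + (B - 1)) / B - 1) 0 ^ γ ∂μ ≤
      ((∫ x, max (R1 x - 1) 0 ^ γ ∂μ) ^ 2 + 2 * ∫ x, max (R1 x - 1) 0 ^ γ ∂μ) / B ^ γ := by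
  obtain ⟨hγ0, hγ1⟩ := hγ
  have hB0 : (0:ℝ) < B := by linarith
  have hBγ : (0:ℝ) < B ^ γ := Real.rpow_pos_of_pos hB0 γ
  set f : Ω → ℝ := fun x => max (R1 x - 1) 0 ^ γ with hf
  set g : Ω → ℝ := fun x => max (R2 x - 1) 0 ^ γ with hg
  set h : Ω → ℝ := fun x => max (R1 x * R2 x - 1) 0 ^ γ with hh
  -- pointwise rewriting of the integrand
  have key : ∀ x, max ((R1 x * R2 x + (B - 1)) / B - 1) 0 ^ γ = h x / B ^ γ := by
    intro x
    have e1 : (R1 x * R2 x + (B - 1)) / B - 1 = (R1 x * R2 x - 1) / B := by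
      field_simp; ring
    have e2 : ((R1 x * R2 x - 1) / B) ⊔ 0 = ((R1 x * R2 x - 1) ⊔ 0) / B := by
      rw [← max_div_div_right hB0.le, zero_div]
    rw [e1, e2, Real.div_rpow (le_max_right _ _) hB0.le]
  -- measurability of the transformation
  have hφ : Measurable fun t : ℝ => max (t - 1) 0 ^ γ :=
    ((Real.continuous_rpow_const hγ0.le).comp
      ((continuous_id.sub continuous_const).max continuous_const)).measurable
  have hindfg : IndepFun f g μ := hind.comp hφ hφ
  have hidfg : IdentDistrib f g μ μ := hid.comp hφ
  have hintfg : Integrable (f * g) μ := hindfg.integrable_mul hint1 hint2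
  -- pointwise inequality
  have hfnn : ∀ x, 0 ≤ f x := fun x => Real.rpow_nonneg (le_max_right _ _) γ
  have hgnn : ∀ x, 0 ≤ g x := fun x => Real.rpow_nonneg (le_max_right _ _) γ
  have hpt : ∀ x, h x ≤ f x * g x + f x + g x := by
    intro x
    set a := max (R1 x - 1) 0 with ha'
    set b := max (R2 x - 1) 0 with hb'
    have hann : 0 ≤ a := le_max_right _ _
    have hbnn : 0 ≤ b := le_max_right _ _
    rcases le_or_gt (R1 x * R2 x) 1 with hle | hlt
    · have hmax : max (R1 x * R2 x - 1) 0 = 0 := max_eq_right (by linarith)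
      have : h x = 0 := by rw [hh]; simp only; rw [hmax, Real.zero_rpow hγ0.ne']
      rw [this]
      have := hfnn x; have := hgnn x
      nlinarith
    · have haR : R1 x ≤ 1 + a := by
        have := le_max_left (R1 x - 1) 0; linarith
      have hbR : R2 x ≤ 1 + b := by
        have := le_max_left (R2 x - 1) 0; linarith
      have hm : R1 x * R2 x ≤ (1 + a) * (1 + b) :=
        mul_le_mul haR hbR (hpos2 x) (by linarith)
      have h1 : max (R1 x * R2 x - 1) 0 ≤ a * b + (a + b) := by
        rw [max_eq_left (by linarith)]; nlinarith
      have habnn : 0 ≤ a * b := mul_nonneg hann hbnn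
      calc h x = max (R1 x * R2 x - 1) 0 ^ γ := rfl
        _ ≤ (a * b + (a + b)) ^ γ :=
            Real.rpow_le_rpow (le_max_right _ _) h1 hγ0.le
        _ ≤ (a * b) ^ γ + (a + b) ^ γ :=
            real_rpow_add_le_add_rpow habnn (by linarith) hγ0.le hγ1
        _ ≤ (a * b) ^ γ + (a ^ γ + b ^ γ) :=
            add_le_add_right (real_rpow_add_le_add_rpow hann hbnn hγ0.le hγ1) _
        _ = f x * g x + f x + g x := by
            rw [Real.mul_rpow hann hbnn]; ring
  -- integrability of h
  have hinth : Integrable h μ := by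
    have h1 : Integrable (fun x => h x / B ^ γ) μ := by
      have := hint3; simp_rw [key] at this; exact this
    have h2 := h1.mul_const (B ^ γ)
    have : (fun x => h x / B ^ γ * B ^ γ) = h := by
      funext x; field_simp
    rwa [this] at h2
  have hgf : ∫ x, g x ∂μ = ∫ x, f x ∂μ := hidfg.integral_eq.symm
  calc ∫ x, max ((R1 x * R2 x + (B - 1)) / B - 1) 0 ^ γ ∂μ
      = ∫ x, h x / B ^ γ ∂μ := by simp_rw [key]
    _ = (∫ x, h x ∂μ) / B ^ γ := integral_div _ _
    _ ≤ ((∫ x, f x ∂μ) ^ 2 + 2 * ∫ x, f x ∂μ) / B ^ γ := by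
        have hnum : ∫ x, h x ∂μ ≤ (∫ x, f x ∂μ) ^ 2 + 2 * ∫ x, f x ∂μ := by
          calc ∫ x, h x ∂μ ≤ ∫ x, (f x * g x + f x + g x) ∂μ :=
                integral_mono hinth ((hintfg.add hint1).add hint2) hpt
            _ = (∫ x, f x * g x ∂μ) + (∫ x, f x ∂μ) + ∫ x, g x ∂μ := by
                have hA : Integrable (fun x => f x * g x + f x) μ := hintfg.add hint1
                have hB' : Integrable (fun x => f x * g x) μ := hintfg
                rw [integral_add hA hint2, integral_add hB' hint1]
            _ = (∫ x, f x ∂μ) ^ 2 + 2 * ∫ x, f x ∂μ := by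
                rw [show ∫ x, f x * g x ∂μ = (∫ x, f x ∂μ) * ∫ x, g x ∂μ from
                  hindfg.integral_mul_eq_mul_integral hint1.1 hint2.1, hgf]; ring
        exact div_le_div_of_nonneg_right hnum hBγ.le
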